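/- arXiv:2512.19104 — 2 statements merged into one kernel-verified Lean document; each statement's English description precedes it below -/
import Mathlib

section
/- Let Δ_t, b, c be nonnegative reals satisfying Δ_{t+1} ≤ (b/(t(t-1)))·√(∑_{i=2}^{t} (i-1)² Δ_i) + c/t for all t ≥ 2. Then for any a ≥ 9b²/4 + 3c with Δ_2 ≤ a/2, it holds that Δ_t ≤ a/t for all t ≥ 2. -/
set_option maxHeartbeats 800000

lemma sumIcc_aux (t : ℕ) (ht : 2 ≤ t) :
    ∑ i ∈ Finset.Icc 2 t, ((i : ℝ) - 1) = (t : ℝ) * ((t : ℝ) - 1) / 2 := by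
  induction t, ht using Nat.le_induction with
  | base => norm_num
  | succ n hn ih =>
    rw [Finset.sum_Icc_succ_top (by omega), ih]
    push_cast
    ring

theorem stmt_10 (Δ : ℕ → ℝ) (b c : ℝ)
    (hΔ : ∀ t, 0 ≤ Δ t) (hb : 0 ≤ b) (hc : 0 ≤ c)
    (hrec : ∀ t : ℕ, 2 ≤ t →
      Δ (t + 1) ≤ b / ((t : ℝ) * ((t : ℝ) - 1))
          * Real.sqrt (∑ i ∈ Finset.Icc 2 t, ((i : ℝ) - 1) ^ 2 * Δ i)
        + c / (t : ℝ)) :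
    ∀ a : ℝ, 9 * b ^ 2 / 4 + 3 * c ≤ a → Δ 2 ≤ a / 2 →
      ∀ t : ℕ, 2 ≤ t → Δ t ≤ a / (t : ℝ) := by
  intro a ha haΔ
  have ha0 : 0 ≤ a := by nlinarith [sq_nonneg b]
  have hs0 : 0 ≤ Real.sqrt a := Real.sqrt_nonneg a
  have hsa : (Real.sqrt a) ^ 2 = a := Real.sq_sqrt ha0
  have key : b * Real.sqrt a ≤ 3 * b ^ 2 / 4 + a / 3 := by
    nlinarith [sq_nonneg (3 * b - 2 * Real.sqrt a)]
  have main : ∀ t, 2 ≤ t → ∀ i, 2 ≤ i → i ≤ t → Δ i ≤ a / i := by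
    intro t ht
    induction t, ht using Nat.le_induction with
    | base =>
      intro i h2 hi
      have : i = 2 := by omega
      subst this
      exact_mod_cast haΔ
    | succ n hn ih =>
      intro i h2 hi
      rcases Nat.lt_or_ge i (n + 1) with h | h
      · exact ih i h2 (by omega)
      · have hi' : i = n + 1 := by omega
        subst hi'
        set x : ℝ := (n : ℝ) with hxdef
        have hx : (2 : ℝ) ≤ x := by rw [hxdef]; exact_mod_cast hn
        have hx0 : (0 : ℝ) < x := by linarith
        have hT : (0 : ℝ) < x * (x - 1) := by nlinarith
        -- bound the sum
        have hsum : ∑ i ∈ Finset.Icc 2 n, ((i : ℝ) - 1) ^ 2 * Δ i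
            ≤ a * (x * (x - 1) / 2) := by
          calc ∑ i ∈ Finset.Icc 2 n, ((i : ℝ) - 1) ^ 2 * Δ i
              ≤ ∑ i ∈ Finset.Icc 2 n, ((i : ℝ) - 1) * a := by
                apply Finset.sum_le_sum
                intro i hi
                obtain ⟨h2i, hin⟩ := Finset.mem_Icc.mp hi
                have h2r : (2 : ℝ) ≤ (i : ℝ) := by exact_mod_cast h2i
                have hΔi : Δ i ≤ a / (i : ℝ) := ih i h2i hin
                have h1 : ((i : ℝ) - 1) ^ 2 * Δ i ≤ ((i : ℝ) - 1) ^ 2 * (a / (i : ℝ)) :=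
                  mul_le_mul_of_nonneg_left hΔi (sq_nonneg _)
                have h2 : ((i : ℝ) - 1) ^ 2 * (a / (i : ℝ)) ≤ ((i : ℝ) - 1) * a := by
                  rw [mul_div_assoc', div_le_iff₀ (by linarith)]
                  nlinarith
                linarith
            _ = a * (x * (x - 1) / 2) := by
                rw [← Finset.sum_mul, sumIcc_aux n hn]
                ring
        -- bound the sqrt
        have hsqrt : Real.sqrt (∑ i ∈ Finset.Icc 2 n, ((i : ℝ) - 1) ^ 2 * Δ i)
            ≤ Real.sqrt a * (x * (x - 1)) / x := by
          have hcmp : a * (x * (x - 1) / 2) ≤ (Real.sqrt a * (x * (x - 1)) / x) ^ 2 := by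
            rw [div_pow, le_div_iff₀ (by positivity), mul_pow, hsa]
            have h2T : x ^ 2 ≤ 2 * (x * (x - 1)) := by nlinarith
            nlinarith [mul_nonneg (mul_nonneg ha0 hT.le) (sub_nonneg.mpr h2T)]
          calc Real.sqrt (∑ i ∈ Finset.Icc 2 n, ((i : ℝ) - 1) ^ 2 * Δ i)
              ≤ Real.sqrt ((Real.sqrt a * (x * (x - 1)) / x) ^ 2) :=
                Real.sqrt_le_sqrt (le_trans hsum hcmp)
            _ = Real.sqrt a * (x * (x - 1)) / x := Real.sqrt_sq (by positivity)
        have hstep := hrec n hn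
        have hb1 : b / (x * (x - 1)) * Real.sqrt (∑ i ∈ Finset.Icc 2 n, ((i : ℝ) - 1) ^ 2 * Δ i)
            ≤ b / (x * (x - 1)) * (Real.sqrt a * (x * (x - 1)) / x) :=
          mul_le_mul_of_nonneg_left hsqrt (by positivity)
        have heq : b / (x * (x - 1)) * (Real.sqrt a * (x * (x - 1)) / x)
            = b * Real.sqrt a / x := by
          field_simp [(by linarith : (0:ℝ) < x - 1).ne']
        have hfin : b * Real.sqrt a / x + c / x ≤ a / (x + 1) := by
          rw [← add_div, div_le_div_iff₀ hx0 (by linarith)]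
          have h2' : b * Real.sqrt a + c ≤ 2 * a / 3 := by linarith
          have h1' : 0 ≤ (2 * a / 3 - (b * Real.sqrt a + c)) * (x - 2) :=
            mul_nonneg (by linarith) (by linarith)
          have h3' : 0 ≤ a * (x - 2) := mul_nonneg ha0 (by linarith)
          linarith [h1', h2', h3']
        have : Δ (n + 1) ≤ a / (x + 1) := by
          rw [heq] at hb1
          linarith
        push_cast
        exact this
  intro t ht
  exact main t ht t ht le_rfl
end

section
/- Let a_1 ≤ a_2 ≤ … ≤ a_N be real numbers and let b_1, …, b_N satisfy |b_k - a_{σ(k)}| ≤ ε for some permutation σ and all k, where the b's are sorted: b_1 ≤ … ≤ b_N. Suppose J is the set of indices of the N/4 smallest b-values and I the set of indices of the N/4 smallest a-values. Then ∑_{i∈I} a_i ≤ ∑_{j∈J} a_j ≤ ∑_{i∈I} a_i + (N/2)·(2ε). -/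
lemma fin_le_apply_of_strictMono {m N : ℕ} (f : Fin m → Fin N) (hf : StrictMono f)
    (k : Fin m) : (k : ℕ) ≤ (f k : ℕ) := by
  have hsub : (Finset.Iic k).image f ⊆ Finset.Iic (f k) := by
    intro x hx
    rw [Finset.mem_image] at hx
    obtain ⟨j, hj, rfl⟩ := hx
    rw [Finset.mem_Iic] at hj ⊢
    exact hf.monotone hj
  have hcard := Finset.card_le_card hsub
  rw [Finset.card_image_of_injective _ hf.injective, Fin.card_Iic, Fin.card_Iic] at hcard
  omega

lemma filter_lt_eq_image {N m : ℕ} (hm : m ≤ N) :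
    Finset.univ.filter (fun k : Fin N => (k : ℕ) < m)
      = Finset.univ.image (Fin.castLE hm) := by
  ext x
  simp only [Finset.mem_filter, Finset.mem_univ, true_and, Finset.mem_image]
  constructor
  · intro hx
    exact ⟨⟨x, hx⟩, rfl⟩
  · rintro ⟨y, rfl⟩
    exact y.isLt

lemma sum_min_quarter {N m : ℕ} (a : Fin N → ℝ) (ha : Monotone a)
    (S : Finset (Fin N)) (h : S.card = m) :
    ∑ k ∈ Finset.univ.filter (fun k : Fin N => (k : ℕ) < m), a k ≤ ∑ s ∈ S, a s := by
  have hm : m ≤ N := by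
    have := Finset.card_le_univ S
    simpa [h] using this
  set f := S.orderEmbOfFin h with hf
  have hS : S = Finset.univ.image f := by
    apply Finset.coe_injective
    rw [Finset.coe_image, Finset.coe_univ, Set.image_univ]
    exact (Finset.range_orderEmbOfFin S h).symm
  have hrhs : ∑ s ∈ S, a s = ∑ k : Fin m, a (f k) := by
    rw [hS, Finset.sum_image (fun x _ y _ hxy => f.injective hxy)]
  have hlhs : ∑ k ∈ Finset.univ.filter (fun k : Fin N => (k : ℕ) < m), a k
      = ∑ k : Fin m, a (Fin.castLE hm k) := by
    rw [filter_lt_eq_image hm,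
      Finset.sum_image (fun x _ y _ hxy => (Fin.castLE_injective hm) hxy)]
  rw [hrhs, hlhs]
  apply Finset.sum_le_sum
  intro k _
  apply ha
  have := fin_le_apply_of_strictMono f f.strictMono k
  exact Fin.le_def.mpr (by simpa using this)

lemma sorted_close {N : ℕ} (a b : Fin N → ℝ) (σ : Equiv.Perm (Fin N)) (ε : ℝ)
    (ha : Monotone a) (hb : Monotone b) (hclose : ∀ k, |b k - a (σ k)| ≤ ε)
    (k : Fin N) : b k ≤ a k + ε := by
  obtain ⟨j, hkj, hσj⟩ : ∃ j, k ≤ j ∧ σ j ≤ k := by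
    by_contra hcon
    push_neg at hcon
    have hsub : (Finset.Ici k).image σ ⊆ Finset.Ioi k := by
      intro x hx
      rw [Finset.mem_image] at hx
      obtain ⟨j, hj, rfl⟩ := hx
      rw [Finset.mem_Ici] at hj
      exact Finset.mem_Ioi.mpr (hcon j hj)
    have hcard := Finset.card_le_card hsub
    rw [Finset.card_image_of_injective _ σ.injective, Fin.card_Ici, Fin.card_Ioi] at hcard
    have := k.isLt
    omega
  have h1 : b k ≤ b j := hb hkj
  have h2 := hclose j
  rw [abs_le] at h2
  have h3 : a (σ j) ≤ a k := ha hσj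
  linarith

theorem stmt_13 (N : ℕ) (hN : 4 ∣ N) (a b : Fin N → ℝ) (σ : Equiv.Perm (Fin N))
    (ε : ℝ) (hε : 0 < ε)
    (ha : Monotone a) (hb : Monotone b)
    (hclose : ∀ k : Fin N, |b k - a (σ k)| ≤ ε) :
    (∑ k ∈ Finset.univ.filter (fun k : Fin N => (k : ℕ) < N / 4), a k)
        ≤ (∑ k ∈ Finset.univ.filter (fun k : Fin N => (k : ℕ) < N / 4), a (σ k))
      ∧ (∑ k ∈ Finset.univ.filter (fun k : Fin N => (k : ℕ) < N / 4), a (σ k))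
        ≤ (∑ k ∈ Finset.univ.filter (fun k : Fin N => (k : ℕ) < N / 4), a k)
          + ((N : ℝ) / 2) * (2 * ε) := by
  set F := Finset.univ.filter (fun k : Fin N => (k : ℕ) < N / 4) with hFdef
  have hm : N / 4 ≤ N := Nat.div_le_self _ _
  have hFcard : F.card = N / 4 := by
    rw [hFdef, filter_lt_eq_image hm,
      Finset.card_image_of_injective _ (Fin.castLE_injective hm), Finset.card_univ,
      Fintype.card_fin]
  constructor
  · have himg : ∑ k ∈ F, a (σ k) = ∑ s ∈ F.image σ, a s :=
      (Finset.sum_image (fun x _ y _ hxy => σ.injective hxy)).symm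
    rw [himg]
    have hcard : (F.image σ).card = N / 4 := by
      rw [Finset.card_image_of_injective _ σ.injective, hFcard]
    exact sum_min_quarter a ha (F.image σ) hcard
  · have hstep : ∀ k ∈ F, a (σ k) ≤ a k + 2 * ε := by
      intro k _
      have h1 := hclose k
      rw [abs_le] at h1
      have h2 := sorted_close a b σ ε ha hb hclose k
      linarith
    have hsum : ∑ k ∈ F, a (σ k) ≤ ∑ k ∈ F, (a k + 2 * ε) := Finset.sum_le_sum hstep
    rw [Finset.sum_add_distrib, Finset.sum_const, nsmul_eq_mul] at hsum
    have hcardF : (F.card : ℝ) ≤ (N : ℝ) / 2 := by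
      have h2 : 2 * (N / 4) ≤ N := by omega
      have h3 : ((N / 4 : ℕ) : ℝ) ≤ (N : ℝ) / 2 := by
        rw [le_div_iff₀ (by norm_num : (0:ℝ) < 2)]
        have := Nat.cast_le (α := ℝ).mpr h2
        push_cast at this
        linarith
      rw [hFcard]
      exact h3
    have hmul : (F.card : ℝ) * (2 * ε) ≤ (N : ℝ) / 2 * (2 * ε) := by
      apply mul_le_mul_of_nonneg_right hcardF
      linarith
    linarith
end
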